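/- Let the common utility function of all types be identical and let c_i be the principal's cost for type i, with piecewise-linear extension c_i^ℓ convex for every i. Then among all truthful randomized mechanisms (mappings from types to distributions over outcomes such that for every (i₁,i₂) ∈ R the expected utility of type i₁'s own assignment is at least that of type i₂'s), there exists a deterministic truthful mechanism whose total cost ∑_i E[c_i(M(i))] is minimal. -/

import Mathlib

open MeasureTheory in
lemma avg_exists {ι : Type*} (S : Finset ι) (lam a b : ι → ℝ)
    (h0 : ∀ i ∈ S, 0 ≤ lam i) (h1 : ∀ i ∈ S, lam i ≤ 1) :
    ∃ t : ℝ, 0 < t ∧ t ≤ 1 ∧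
      ∑ i ∈ S, (if t ≤ lam i then b i else a i) ≤
      ∑ i ∈ S, ((1 - lam i) * a i + lam i * b i) := by
  by_contra hcon
  push_neg at hcon
  set μ := volume.restrict (Set.Ioc (0:ℝ) 1) with hμ
  set I := ∑ i ∈ S, ((1 - lam i) * a i + lam i * b i) with hI
  set F : ℝ → ℝ := fun t => ∑ i ∈ S, (if t ≤ lam i then b i else a i) with hF
  have hrw : ∀ i, (fun t : ℝ => if t ≤ lam i then b i else a i)
      = fun t => a i + (Set.Iic (lam i)).indicator (fun _ => b i - a i) t := by
    intro i
    funext t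
    by_cases h : t ≤ lam i
    · simp [Set.indicator_of_mem, h]
    · simp [Set.indicator_of_notMem, h]
  have hfin : μ Set.univ < ⊤ := by
    rw [hμ, Measure.restrict_apply_univ]
    simp [Real.volume_Ioc]
  have hfinm : IsFiniteMeasure μ := ⟨hfin⟩
  have hint : ∀ i ∈ S, Integrable (fun t : ℝ => if t ≤ lam i then b i else a i) μ := by
    intro i _
    rw [hrw i]
    exact (integrable_const _).add ((integrable_const _).indicator measurableSet_Iic)
  have hcalc : ∀ i ∈ S, ∫ t, (if t ≤ lam i then b i else a i) ∂μ
      = (1 - lam i) * a i + lam i * b i := by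
    intro i hi
    rw [hrw i]
    rw [integral_add (integrable_const _) ((integrable_const _).indicator measurableSet_Iic)]
    rw [integral_indicator measurableSet_Iic]
    rw [hμ, Measure.restrict_restrict measurableSet_Iic]
    have hset : Set.Iic (lam i) ∩ Set.Ioc (0:ℝ) 1 = Set.Ioc 0 (lam i) := by
      ext t
      simp only [Set.mem_inter_iff, Set.mem_Iic, Set.mem_Ioc]
      constructor
      · rintro ⟨h1', h2', h3'⟩; exact ⟨h2', h1'⟩
      · rintro ⟨h1', h2'⟩; exact ⟨h2', h1', le_trans h2' (h1 i hi)⟩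
    rw [hset]
    rw [integral_const, integral_const]
    rw [measureReal_def, measureReal_def]
    rw [Measure.restrict_apply_univ, Measure.restrict_apply_univ]
    simp only [Real.volume_Ioc, smul_eq_mul]
    rw [ENNReal.toReal_ofReal (by linarith : (0:ℝ) ≤ 1 - 0),
        ENNReal.toReal_ofReal (by simpa using h0 i hi)]
    ring
  have hIF : ∫ t, F t ∂μ = I := by
    rw [hF, hI]
    rw [integral_finset_sum S hint]
    exact Finset.sum_congr rfl hcalc
  have hFint : Integrable F μ := integrable_finset_sum S hint
  have hintc : Integrable (fun _ : ℝ => I) μ := integrable_const _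
  have hzero : ∫ t, (F t - I) ∂μ = 0 := by
    rw [integral_sub hFint hintc, hIF, integral_const]
    rw [hμ, measureReal_def, Measure.restrict_apply_univ]
    simp [Real.volume_Ioc]
  have hnn : 0 ≤ᵐ[μ] fun t => F t - I := by
    rw [hμ]
    refine (ae_restrict_iff' measurableSet_Ioc).2 ?_
    filter_upwards with t ht
    have := hcon t ht.1 ht.2
    simp only [Pi.zero_apply]
    linarith
  have hae := (integral_eq_zero_iff_of_nonneg_ae hnn ((hFint.sub hintc))).1 hzero
  rw [Filter.EventuallyEq, ae_iff] at hae
  have hsub : Set.Ioc (0:ℝ) 1 ⊆ {t | ¬ (F t - I) = (0:ℝ→ℝ) t} := by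
    intro t ht
    have := hcon t ht.1 ht.2
    simp only [Set.mem_setOf_eq, Pi.zero_apply]
    intro h
    linarith
  have : μ (Set.Ioc (0:ℝ) 1) = 0 := measure_mono_null hsub hae
  rw [hμ, Measure.restrict_apply_self] at this
  simp [Real.volume_Ioc] at this

open Finset in
lemma exists_det_le
    {Θ : Type*} [Fintype Θ] {m : ℕ} (hm : 0 < m)
    (R : Θ → Θ → Prop)
    (o : Fin m → ℝ) (ho : StrictMono o)
    (c : Θ → Fin m → ℝ)
    (hconv : ∀ i, ∀ j₁ j₂ j₃ : Fin m, j₁ < j₂ → j₂ < j₃ →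
      ∀ t : ℝ, 0 ≤ t → t ≤ 1 → o j₂ = t * o j₁ + (1 - t) * o j₃ →
        c i j₂ ≤ t * c i j₁ + (1 - t) * c i j₃)
    (p : Θ → Fin m → ℝ)
    (hp0 : ∀ i j, 0 ≤ p i j) (hp1 : ∀ i, ∑ j, p i j = 1)
    (hpt : ∀ i₁ i₂, R i₁ i₂ → ∑ j, p i₁ j * o j ≥ ∑ j, p i₂ j * o j) :
    ∃ N : Θ → Fin m,
      (∀ i₁ i₂, R i₁ i₂ → o (N i₁) ≥ o (N i₂)) ∧
      ∑ i, c i (N i) ≤ ∑ i, ∑ j, p i j * c i j := by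
  classical
  set v : Θ → ℝ := fun i => ∑ j, p i j * o j with hv
  have hvi : ∀ i, v i = ∑ j, p i j * o j := fun i => by rw [hv]
  set bot : Fin m := ⟨0, hm⟩ with hbot
  set top : Fin m := ⟨m - 1, Nat.sub_lt hm one_pos⟩ with htop
  have hjtop : ∀ j : Fin m, j ≤ top := by
    intro j
    rw [Fin.le_def]
    have := j.isLt
    simp only [htop]
    omega
  have hbotj : ∀ j : Fin m, bot ≤ j := by
    intro j; rw [Fin.le_def]; simp [hbot]
  have hvub : ∀ i, v i ≤ o top := by
    intro i
    rw [hvi]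
    calc ∑ j, p i j * o j ≤ ∑ j : Fin m, p i j * o top :=
          Finset.sum_le_sum (fun j _ =>
            mul_le_mul_of_nonneg_left (ho.monotone (hjtop j)) (hp0 i j))
      _ = o top := by rw [← Finset.sum_mul, hp1 i, one_mul]
  have hvlb : ∀ i, o bot ≤ v i := by
    intro i
    rw [hvi]
    calc o bot = ∑ j : Fin m, p i j * o bot := by rw [← Finset.sum_mul, hp1 i, one_mul]
      _ ≤ ∑ j, p i j * o j :=
          Finset.sum_le_sum (fun j _ =>
            mul_le_mul_of_nonneg_left (ho.monotone (hbotj j)) (hp0 i j))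
  have hAne : ∀ i, (Finset.univ.filter (fun j => o j ≤ v i)).Nonempty :=
    fun i => ⟨bot, Finset.mem_filter.2 ⟨Finset.mem_univ _, hvlb i⟩⟩
  set low : Θ → Fin m := fun i => (Finset.univ.filter (fun j => o j ≤ v i)).max' (hAne i)
    with hlow
  have hlow_le : ∀ i, o (low i) ≤ v i := by
    intro i
    have := Finset.max'_mem (Finset.univ.filter (fun j => o j ≤ v i)) (hAne i)
    exact (Finset.mem_filter.1 this).2
  have hlow_max : ∀ i (j : Fin m), o j ≤ v i → j ≤ low i := by
    intro i j hj
    exact Finset.le_max' _ j (Finset.mem_filter.2 ⟨Finset.mem_univ _, hj⟩)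
  set up : Θ → Fin m :=
    fun i => if h : (low i).1 + 1 < m then ⟨(low i).1 + 1, h⟩ else low i with hup
  have hup_eq : ∀ i, (up i = low i ∧ low i = top ∧ v i = o (low i)) ∨
      ((up i).1 = (low i).1 + 1 ∧ v i < o (up i)) := by
    intro i
    by_cases h : (low i).1 + 1 < m
    · right
      have he : up i = ⟨(low i).1 + 1, h⟩ := by simp only [hup]; rw [dif_pos h]
      refine ⟨by rw [he], ?_⟩
      by_contra hcon
      push_neg at hcon
      have := hlow_max i (up i) hcon
      rw [he] at this
      have h2 : (low i).1 + 1 ≤ (low i).1 := by simpa [Fin.le_def] using this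
      omega
    · left
      have he : up i = low i := by simp only [hup]; rw [dif_neg h]
      have hlt : low i = top := by
        apply Fin.ext
        have := (low i).isLt
        simp only [htop]
        omega
      refine ⟨he, hlt, le_antisymm ?_ (hlow_le i)⟩
      rw [hlt]; exact hvub i
  have hlowup : ∀ i, low i ≤ up i := by
    intro i
    rcases hup_eq i with ⟨h1, _⟩ | ⟨h1, _⟩
    · rw [h1]
    · rw [Fin.le_def]; omega
  set lam : Θ → ℝ := fun i => (v i - o (low i)) / (o (up i) - o (low i)) with hlam
  have hlam0 : ∀ i, 0 ≤ lam i := fun i =>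
    div_nonneg (sub_nonneg.2 (hlow_le i)) (sub_nonneg.2 (ho.monotone (hlowup i)))
  have hlam1 : ∀ i, lam i ≤ 1 := by
    intro i
    rcases hup_eq i with ⟨h1, _, h3⟩ | ⟨h1, h2⟩
    · have : lam i = 0 := by simp only [hlam]; rw [h3, sub_self, zero_div]
      rw [this]; norm_num
    · have hd : 0 < o (up i) - o (low i) := by
        have := hlow_le i; linarith
      rw [hlam]
      rw [div_le_one hd]
      linarith
  have hinterp : ∀ i, v i - o (low i) = lam i * (o (up i) - o (low i)) := by
    intro i
    rcases hup_eq i with ⟨h1, _, h3⟩ | ⟨h1, h2⟩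
    · rw [h3, h1, sub_self, mul_zero]
    · have hd : 0 < o (up i) - o (low i) := by
        have := hlow_le i; linarith
      rw [hlam]
      rw [div_mul_cancel₀ _ hd.ne']
  -- Jensen: the two-point rounding has smaller cost than p i
  have jensen : ∀ i, (1 - lam i) * c i (low i) + lam i * c i (up i) ≤ ∑ j, p i j * c i j := by
    intro i
    rcases hup_eq i with ⟨h1, h2, h3⟩ | ⟨h1, h2⟩
    · -- degenerate: v i = o (low i), low i = top
      have h0 : ∑ j, p i j * (o (low i) - o j) = 0 := by
        have he : ∑ j, p i j * (o (low i) - o j)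
            = (∑ j, p i j) * o (low i) - ∑ j, p i j * o j := by
          rw [Finset.sum_mul, ← Finset.sum_sub_distrib]
          exact Finset.sum_congr rfl (fun j _ => by ring)
        rw [he, hp1 i, one_mul, ← hvi, h3, sub_self]
      have hterm := (Finset.sum_eq_zero_iff_of_nonneg (fun j _ =>
        mul_nonneg (hp0 i j) (sub_nonneg.2 (h2 ▸ ho.monotone (hjtop j))))).1 h0
      have hcc : ∀ j, p i j * c i j = p i j * c i (low i) := by
        intro j
        rcases eq_or_ne (p i j) 0 with hz | hz
        · rw [hz, zero_mul, zero_mul]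
        · have ht := hterm j (Finset.mem_univ j)
          have h4 : o (low i) - o j = 0 := by
            rcases mul_eq_zero.1 ht with h | h
            · exact absurd h hz
            · exact h
          have : j = low i := ho.injective (by linarith)
          rw [this]
      have hsum : ∑ j, p i j * c i j = c i (low i) := by
        rw [Finset.sum_congr rfl (fun j _ => hcc j), ← Finset.sum_mul, hp1 i, one_mul]
      rw [hsum, h1]
      have : (1 - lam i) * c i (low i) + lam i * c i (low i) = c i (low i) := by ring
      linarith
    · -- main case: (up i).1 = (low i).1 + 1, v i < o (up i)
      have hlu : low i < up i := by rw [Fin.lt_def]; omega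
      have hd : 0 < o (up i) - o (low i) := sub_pos.2 (ho hlu)
      set s : ℝ := (c i (up i) - c i (low i)) / (o (up i) - o (low i)) with hs
      have hsd : s * (o (up i) - o (low i)) = c i (up i) - c i (low i) := by
        rw [hs]; exact div_mul_cancel₀ _ hd.ne'
      have hL : ∀ j, c i (low i) + s * (o j - o (low i)) ≤ c i j := by
        intro j
        rcases lt_trichotomy j (low i) with hj | hj | hj
        · have hoj : o j < o (low i) := ho hj
          have houj : 0 < o (up i) - o j := by
            have := ho (lt_trans hj hlu); linarith
          have ht0 : 0 ≤ (o (up i) - o (low i)) / (o (up i) - o j) :=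
            div_nonneg (le_of_lt hd) (le_of_lt houj)
          have ht1 : (o (up i) - o (low i)) / (o (up i) - o j) ≤ 1 := by
            rw [div_le_one houj]; linarith
          have hid : o (low i) = ((o (up i) - o (low i)) / (o (up i) - o j)) * o j
              + (1 - (o (up i) - o (low i)) / (o (up i) - o j)) * o (up i) := by
            field_simp
            try ring
          have hkey := hconv i j (low i) (up i) hj hlu _ ht0 ht1 hid
          have h5 := mul_le_mul_of_nonneg_left hkey (le_of_lt houj)
          have h6 : (o (up i) - o j) * ((o (up i) - o (low i)) / (o (up i) - o j) * c i j
              + (1 - (o (up i) - o (low i)) / (o (up i) - o j)) * c i (up i))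
              = (o (up i) - o (low i)) * c i j + (o (low i) - o j) * c i (up i) := by
            field_simp
            try ring
          rw [h6] at h5
          have h7 : s * (o j - o (low i)) ≤ c i j - c i (low i) := by
            rw [hs, div_mul_eq_mul_div, div_le_iff₀ hd]
            nlinarith [h5]
          linarith
        · rw [hj, sub_self, mul_zero, add_zero]
        · have hjup : up i ≤ j := by
            rw [Fin.le_def]
            rw [Fin.lt_def] at hj
            omega
          rcases eq_or_lt_of_le hjup with he | hlt
          · rw [← he]
            linarith [hsd]
          · have hoj : o (up i) < o j := ho hlt
            have hojl : 0 < o j - o (low i) := by linarith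
            have ht0 : 0 ≤ (o j - o (up i)) / (o j - o (low i)) :=
              div_nonneg (by linarith) (le_of_lt hojl)
            have ht1 : (o j - o (up i)) / (o j - o (low i)) ≤ 1 := by
              rw [div_le_one hojl]; linarith
            have hid : o (up i) = ((o j - o (up i)) / (o j - o (low i))) * o (low i)
                + (1 - (o j - o (up i)) / (o j - o (low i))) * o j := by
              field_simp
              try ring
            have hkey := hconv i (low i) (up i) j hlu hlt _ ht0 ht1 hid
            have h5 := mul_le_mul_of_nonneg_left hkey (le_of_lt hojl)
            have h6 : (o j - o (low i)) * ((o j - o (up i)) / (o j - o (low i)) * c i (low i)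
                + (1 - (o j - o (up i)) / (o j - o (low i))) * c i j)
                = (o j - o (up i)) * c i (low i) + (o (up i) - o (low i)) * c i j := by
              field_simp
              try ring
            rw [h6] at h5
            have h7 : s * (o j - o (low i)) ≤ c i j - c i (low i) := by
              rw [hs, div_mul_eq_mul_div, div_le_iff₀ hd]
              nlinarith [h5]
            linarith
      have hsum : ∑ j, p i j * (c i (low i) + s * (o j - o (low i))) ≤ ∑ j, p i j * c i j :=
        Finset.sum_le_sum (fun j _ => mul_le_mul_of_nonneg_left (hL j) (hp0 i j))
      have hlin : ∑ j, p i j * (c i (low i) + s * (o j - o (low i)))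
          = c i (low i) + s * (v i - o (low i)) := by
        have he : ∀ j : Fin m, p i j * (c i (low i) + s * (o j - o (low i)))
            = c i (low i) * p i j + s * (p i j * o j) - s * o (low i) * p i j := fun j => by ring
        rw [Finset.sum_congr rfl (fun j _ => he j), Finset.sum_sub_distrib,
          Finset.sum_add_distrib, ← Finset.mul_sum, ← Finset.mul_sum, ← Finset.mul_sum,
          hp1 i, ← hvi]
        ring
      have hfin : c i (low i) + s * (v i - o (low i))
          = (1 - lam i) * c i (low i) + lam i * c i (up i) := by
        rw [hinterp i]
        linear_combination (lam i) * hsd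
      linarith
  -- choose the rounding threshold
  obtain ⟨t, ht0, ht1, havg⟩ := avg_exists Finset.univ lam
    (fun i => c i (low i)) (fun i => c i (up i))
    (fun i _ => hlam0 i) (fun i _ => hlam1 i)
  refine ⟨fun i => if t ≤ lam i then up i else low i, ?_, ?_⟩
  · -- truthfulness
    intro i₁ i₂ h12
    have hv12 : v i₂ ≤ v i₁ := by rw [hvi, hvi]; exact hpt i₁ i₂ h12
    apply ho.monotone
    have hlowm : low i₂ ≤ low i₁ := hlow_max i₁ (low i₂) (le_trans (hlow_le i₂) hv12)
    have hNlow : ∀ i, low i ≤ (if t ≤ lam i then up i else low i) := by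
      intro i; split
      · exact hlowup i
      · exact le_refl _
    have hNup : ∀ i, (if t ≤ lam i then up i else low i) ≤ up i := by
      intro i; split
      · exact le_refl _
      · exact hlowup i
    rcases eq_or_lt_of_le hlowm with he | hlt
    · -- equal lows
      have hue : up i₂ = up i₁ := by simp only [hup]; rw [he]
      have hl12 : lam i₂ ≤ lam i₁ := by
        rcases eq_or_lt_of_le (sub_nonneg.2 (ho.monotone (hlowup i₂))) with hd0 | hdpos
        · have hz : lam i₂ = 0 := by simp only [hlam]; rw [← hd0, div_zero]
          rw [hz]; exact hlam0 i₁
        · have hdpos' : 0 < o (up i₁) - o (low i₁) := by rw [← he, ← hue]; exact hdpos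
          simp only [hlam]
          rw [he, hue]
          exact (div_le_div_iff_of_pos_right hdpos').2 (by linarith)
      show (if t ≤ lam i₂ then up i₂ else low i₂) ≤ (if t ≤ lam i₁ then up i₁ else low i₁)
      by_cases hcond : t ≤ lam i₂
      · have hcond1 : t ≤ lam i₁ := le_trans hcond hl12
        rw [if_pos hcond, if_pos hcond1, hue]
      · rw [if_neg hcond, he]
        exact hNlow i₁
    · -- strictly smaller low
      have h3 : up i₂ ≤ low i₁ := by
        rcases hup_eq i₂ with ⟨ha, _, _⟩ | ⟨ha, _⟩
        · rw [ha]; exact le_of_lt hlt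
        · rw [Fin.le_def]
          rw [Fin.lt_def] at hlt
          omega
      show (if t ≤ lam i₂ then up i₂ else low i₂) ≤ (if t ≤ lam i₁ then up i₁ else low i₁)
      exact le_trans (hNup i₂) (le_trans h3 (hNlow i₁))
  · -- cost
    calc ∑ i, c i (if t ≤ lam i then up i else low i)
        = ∑ i, (if t ≤ lam i then c i (up i) else c i (low i)) :=
          Finset.sum_congr rfl (fun i _ => apply_ite (c i) _ _ _)
      _ ≤ ∑ i, ((1 - lam i) * c i (low i) + lam i * c i (up i)) := havg
      _ ≤ ∑ i, ∑ j, p i j * c i j := Finset.sum_le_sum (fun i _ => jensen i)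

open Finset in
theorem optimal_deterministic_exists_of_convex_costs
    {Θ : Type*} [Fintype Θ] {m : ℕ} (hm : 0 < m)
    (R : Θ → Θ → Prop) (hR : ∀ i, R i i)
    (o : Fin m → ℝ) (ho : StrictMono o) (ho0 : ∀ j, 0 ≤ o j)
    (c : Θ → Fin m → ℝ) (hc0 : ∀ i j, 0 ≤ c i j)
    -- convexity of the piecewise-linear extension of each c_i
    (hconv : ∀ i, ∀ j₁ j₂ j₃ : Fin m, j₁ < j₂ → j₂ < j₃ →
      ∀ t : ℝ, 0 ≤ t → t ≤ 1 → o j₂ = t * o j₁ + (1 - t) * o j₃ →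
        c i j₂ ≤ t * c i j₁ + (1 - t) * c i j₃) :
    ∃ M : Θ → Fin m,
      (∀ i₁ i₂, R i₁ i₂ → o (M i₁) ≥ o (M i₂)) ∧
      ∀ p : Θ → Fin m → ℝ,
        (∀ i j, 0 ≤ p i j) →
        (∀ i, ∑ j, p i j = 1) →
        (∀ i₁ i₂, R i₁ i₂ → ∑ j, p i₁ j * o j ≥ ∑ j, p i₂ j * o j) →
        ∑ i, c i (M i) ≤ ∑ i, ∑ j, p i j * c i j := by
  classical
  obtain ⟨M, hMmem, hMmin⟩ := Finset.exists_min_image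
    (Finset.univ.filter (fun M : Θ → Fin m => ∀ i₁ i₂, R i₁ i₂ → o (M i₁) ≥ o (M i₂)))
    (fun M => ∑ i, c i (M i))
    ⟨fun _ => ⟨0, hm⟩, Finset.mem_filter.2 ⟨Finset.mem_univ _, fun _ _ _ => le_refl _⟩⟩
  refine ⟨M, (Finset.mem_filter.1 hMmem).2, ?_⟩
  intro p hp0 hp1 hpt
  obtain ⟨N, hN1, hN2⟩ := exists_det_le hm R o ho c hconv p hp0 hp1 hpt
  exact le_trans (hMmin N (Finset.mem_filter.2 ⟨Finset.mem_univ _, hN1⟩)) hN2
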